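/- Let d ≥ 1, let G be a finite subgroup of GL_d(ℂ), and let G act on the free associative algebra ℂ⟨x_1,…,x_d⟩ by ℂ-algebra automorphisms extending the natural linear action of G on the ℂ-span of x_1,…,x_d. Then for every integer m ≥ 0, the ℂ-dimension of the space of G-invariant elements in the degree-m homogeneous component of ℂ⟨x_1,…,x_d⟩ (the span of words of length m) equals (1/|G|) · Σ_{g∈G} (tr g)^m, where tr g is the trace of g as a d×d matrix. -/

import Mathlib

noncomputable section

/-- The action of `g ∈ GL_d(ℂ)` on the free associative algebra `ℂ⟨x_1,…,x_d⟩`: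
the algebra endomorphism with `g(x_i) = ∑_j g_{ji} x_j`. -/
def glAct (d : ℕ) (g : GL (Fin d) ℂ) : FreeAlgebra ℂ (Fin d) →ₐ[ℂ] FreeAlgebra ℂ (Fin d) :=
  FreeAlgebra.lift ℂ fun i : Fin d =>
    ∑ j : Fin d, ((g : Matrix (Fin d) (Fin d) ℂ) j i) • FreeAlgebra.ι ℂ j

/-- The degree-`m` homogeneous component of `ℂ⟨x_1,…,x_d⟩`: the span of the words of
length `m`. -/
def freeDegComp (d m : ℕ) : Submodule ℂ (FreeAlgebra ℂ (Fin d)) :=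
  Submodule.span ℂ
    {x : FreeAlgebra ℂ (Fin d) |
      ∃ l : List (Fin d), l.length = m ∧ x = (l.map (FreeAlgebra.ι ℂ)).prod}

/-! ### Auxiliary material -/

lemma equivMAFM_prod (X : Type*) (l : List X) :
    FreeAlgebra.equivMonoidAlgebraFreeMonoid (R := ℂ) (X := X)
        ((l.map (FreeAlgebra.ι ℂ)).prod) =
      MonoidAlgebra.single (FreeMonoid.ofList l) (1 : ℂ) := by
  induction l with
  | nil =>
    simp [MonoidAlgebra.one_def]
  | cons x l ih =>
    have hx : FreeAlgebra.equivMonoidAlgebraFreeMonoid (R := ℂ) (X := X) (FreeAlgebra.ι ℂ x) =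
        MonoidAlgebra.single (FreeMonoid.of x) (1 : ℂ) := by
      simp only [FreeAlgebra.equivMonoidAlgebraFreeMonoid, AlgEquiv.ofAlgHom_apply]
      show (FreeAlgebra.lift ℂ fun x ↦ (MonoidAlgebra.of ℂ (FreeMonoid X)) (FreeMonoid.of x))
          (FreeAlgebra.ι ℂ x) = _
      rw [FreeAlgebra.lift_ι_apply]
      rfl
    rw [List.map_cons, List.prod_cons, map_mul, hx, ih, MonoidAlgebra.single_mul_single, one_mul]
    rfl

lemma basisFreeMonoid_apply (X : Type*) (l : List X) :
    FreeAlgebra.basisFreeMonoid ℂ X (FreeMonoid.ofList l) = (l.map (FreeAlgebra.ι ℂ)).prod := by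
  apply (FreeAlgebra.equivMonoidAlgebraFreeMonoid (R := ℂ) (X := X)).injective
  rw [equivMAFM_prod, FreeAlgebra.basisFreeMonoid, Module.Basis.map_apply, Finsupp.coe_basisSingleOne]
  simp

/-- The word `x_{w 0} ⋯ x_{w (m-1)}`. -/
def word (d m : ℕ) (w : Fin m → Fin d) : FreeAlgebra ℂ (Fin d) :=
  ((List.ofFn w).map (FreeAlgebra.ι ℂ)).prod

lemma word_zero (d : ℕ) (w : Fin 0 → Fin d) : word d 0 w = 1 := by simp [word]

lemma word_succ (d m : ℕ) (w : Fin (m + 1) → Fin d) :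
    word d (m + 1) w = FreeAlgebra.ι ℂ (w 0) * word d m (w ∘ Fin.succ) := by
  simp [word, List.ofFn_succ, Function.comp_def]

lemma freeDegComp_eq_span (d m : ℕ) :
    freeDegComp d m = Submodule.span ℂ (Set.range (word d m)) := by
  unfold freeDegComp
  congr 1
  ext x
  constructor
  · rintro ⟨l, hl, rfl⟩
    subst hl
    exact ⟨l.get, by simp [word]⟩
  · rintro ⟨w, rfl⟩
    exact ⟨List.ofFn w, by simp [word]⟩

lemma word_linearIndependent (d m : ℕ) : LinearIndependent ℂ (word d m) := by
  have h : word d m = (FreeAlgebra.basisFreeMonoid ℂ (Fin d)) ∘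
      (fun w : Fin m → Fin d => FreeMonoid.ofList (List.ofFn w)) := by
    funext w
    simp [basisFreeMonoid_apply, word]
  rw [h]
  exact (FreeAlgebra.basisFreeMonoid ℂ (Fin d)).linearIndependent.comp _
    (fun a b hab => List.ofFn_injective (by simpa using hab))

/-- The basis of words of length `m` for the degree-`m` component. -/
def wordBasis (d m : ℕ) : Module.Basis (Fin m → Fin d) ℂ ↥(freeDegComp d m) :=
  (Module.Basis.span (word_linearIndependent d m)).map
    (LinearEquiv.ofEq _ _ (freeDegComp_eq_span d m).symm)

lemma wordBasis_apply (d m : ℕ) (w : Fin m → Fin d) :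
    ((wordBasis d m w : ↥(freeDegComp d m)) : FreeAlgebra ℂ (Fin d)) = word d m w := by
  rw [wordBasis, Module.Basis.map_apply, LinearEquiv.coe_ofEq_apply, Module.Basis.span_apply]

instance (d m : ℕ) : FiniteDimensional ℂ ↥(freeDegComp d m) :=
  Module.Finite.of_basis (wordBasis d m)

lemma glAct_ι (d : ℕ) (g : GL (Fin d) ℂ) (i : Fin d) :
    glAct d g (FreeAlgebra.ι ℂ i) =
      ∑ j : Fin d, ((g : Matrix (Fin d) (Fin d) ℂ) j i) • FreeAlgebra.ι ℂ j := by
  simp [glAct]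

lemma glAct_word (d m : ℕ) (g : GL (Fin d) ℂ) (w : Fin m → Fin d) :
    glAct d g (word d m w) =
      ∑ f : Fin m → Fin d,
        (∏ i : Fin m, ((g : Matrix (Fin d) (Fin d) ℂ) (f i) (w i))) • word d m f := by
  induction m with
  | zero =>
    simp [word_zero]
  | succ m ih =>
    rw [word_succ, map_mul, glAct_ι, ih (w ∘ Fin.succ)]
    rw [Finset.sum_mul_sum]
    rw [← (Fin.consEquiv (fun _ : Fin (m + 1) => Fin d)).sum_comp]
    rw [Fintype.sum_prod_type]
    refine Finset.sum_congr rfl fun j _ => Finset.sum_congr rfl fun f _ => ?_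
    rw [smul_mul_smul_comm]
    congr 1
    · rw [Fin.prod_univ_succ]
      simp [Fin.consEquiv]
    · rw [word_succ]
      simp [Fin.consEquiv, Function.comp_def]

lemma glAct_one (d : ℕ) : glAct d 1 = AlgHom.id ℂ _ := by
  apply FreeAlgebra.hom_ext
  funext i
  simp [glAct, Matrix.one_apply, ite_smul]

lemma glAct_mul (d : ℕ) (g h : GL (Fin d) ℂ) :
    glAct d (g * h) = (glAct d g).comp (glAct d h) := by
  apply FreeAlgebra.hom_ext
  funext i
  simp only [Function.comp_apply, AlgHom.coe_comp, FreeAlgebra.lift_ι_apply, glAct]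
  rw [map_sum]
  simp only [map_smul, FreeAlgebra.lift_ι_apply]
  simp only [Finset.smul_sum, smul_smul]
  rw [Finset.sum_comm]
  refine Finset.sum_congr rfl fun j _ => ?_
  rw [← Finset.sum_smul]
  congr 1
  simp [Matrix.mul_apply, mul_comm]

lemma glAct_mem (d m : ℕ) (g : GL (Fin d) ℂ) {x : FreeAlgebra ℂ (Fin d)}
    (hx : x ∈ freeDegComp d m) : glAct d g x ∈ freeDegComp d m := by
  rw [freeDegComp_eq_span] at hx ⊢
  induction hx using Submodule.span_induction with
  | mem x hx =>
    obtain ⟨w, rfl⟩ := hx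
    rw [glAct_word]
    exact Submodule.sum_mem _ fun f _ =>
      Submodule.smul_mem _ _ (Submodule.subset_span ⟨f, rfl⟩)
  | zero => simp
  | add x y _ _ hx hy => rw [map_add]; exact add_mem hx hy
  | smul c x _ hx => rw [map_smul]; exact Submodule.smul_mem _ _ hx

/-- The representation of `G` on the degree-`m` component. -/
def rep (d m : ℕ) (G : Subgroup (GL (Fin d) ℂ)) :
    Representation ℂ ↥G ↥(freeDegComp d m) where
  toFun g := ((glAct d (g : GL (Fin d) ℂ)).toLinearMap).restrict
    (fun _ hx => glAct_mem d m _ hx)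
  map_one' := by
    ext x
    simp only [LinearMap.restrict_coe_apply, Module.End.one_apply]
    simp [glAct_one]
  map_mul' g h := by
    ext x
    simp only [LinearMap.restrict_coe_apply, Module.End.mul_apply]
    simp [glAct_mul]
    rfl

lemma rep_trace (d m : ℕ) (G : Subgroup (GL (Fin d) ℂ)) (g : G) :
    LinearMap.trace ℂ _ (rep d m G g) =
      (Matrix.trace ((g : GL (Fin d) ℂ) : Matrix (Fin d) (Fin d) ℂ)) ^ m := by
  set A : Matrix (Fin d) (Fin d) ℂ := ((g : GL (Fin d) ℂ) : Matrix (Fin d) (Fin d) ℂ)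
  have hb : ∀ w : Fin m → Fin d,
      rep d m G g (wordBasis d m w) =
        ∑ f : Fin m → Fin d, (∏ i : Fin m, A (f i) (w i)) • wordBasis d m f := by
    intro w
    apply Subtype.ext
    have h0 : ((rep d m G g (wordBasis d m w) : ↥(freeDegComp d m)) : FreeAlgebra ℂ (Fin d)) =
        glAct d (g : GL (Fin d) ℂ) ((wordBasis d m w : ↥(freeDegComp d m)) :
          FreeAlgebra ℂ (Fin d)) := rfl
    rw [h0, wordBasis_apply, glAct_word, Submodule.coe_sum]
    refine Finset.sum_congr rfl fun f _ => ?_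
    rw [SetLike.val_smul, wordBasis_apply]
  rw [LinearMap.trace_eq_matrix_trace ℂ (wordBasis d m)]
  rw [Matrix.trace]
  have hdiag : ∀ w : Fin m → Fin d,
      (LinearMap.toMatrix (wordBasis d m) (wordBasis d m) (rep d m G g)).diag w =
        ∏ i : Fin m, A (w i) (w i) := by
    intro w
    rw [Matrix.diag_apply, LinearMap.toMatrix_apply, hb w]
    simp [Finsupp.single_apply]
  rw [Finset.sum_congr rfl fun w _ => hdiag w]
  rw [Matrix.trace, Fintype.sum_pow]
  rfl

/-! ### Main theorem -/

/-- Noncommutative Molien formula of Dicks and Formanek, stated coefficientwise: the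
dimension of the space of `G`-invariants of degree `m` equals `(1/|G|) ∑_{g ∈ G} (tr g)^m`. -/
theorem noncommutative_molien (d : ℕ) (hd : 1 ≤ d) (G : Subgroup (GL (Fin d) ℂ))
    [Fintype G] (m : ℕ) :
    (Module.finrank ℂ
        ↥(freeDegComp d m ⊓
          ⨅ g ∈ G, LinearMap.eqLocus (glAct d g).toLinearMap LinearMap.id) : ℂ) =
      (1 / (Fintype.card G : ℂ)) *
        ∑ g : G, (Matrix.trace ((g : GL (Fin d) ℂ) : Matrix (Fin d) (Fin d) ℂ)) ^ m := by
  haveI : Invertible (Fintype.card G : ℂ) :=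
    invertibleOfNonzero (by exact_mod_cast Fintype.card_ne_zero)
  set ρ := rep d m G
  have hsub : freeDegComp d m ⊓
      (⨅ g ∈ G, LinearMap.eqLocus (glAct d g).toLinearMap LinearMap.id) =
      Submodule.map (freeDegComp d m).subtype ρ.invariants := by
    ext x
    simp only [Submodule.mem_inf, Submodule.mem_iInf, LinearMap.mem_eqLocus,
      Submodule.mem_map, Representation.mem_invariants]
    constructor
    · rintro ⟨hxW, hfix⟩
      refine ⟨⟨x, hxW⟩, fun g => Subtype.ext ?_, rfl⟩
      exact hfix g g.2
    · rintro ⟨⟨y, hyW⟩, hy, rfl⟩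
      refine ⟨hyW, fun g hg => ?_⟩
      exact congrArg Subtype.val (hy ⟨g, hg⟩)
  rw [hsub, Submodule.finrank_map_subtype_eq]
  haveI : Module.Free ℂ ρ.invariants := Module.Free.of_divisionRing ℂ ρ.invariants
  haveI : Module.Free ℂ (LinearMap.ker ρ.averageMap) :=
    Module.Free.of_divisionRing ℂ (LinearMap.ker ρ.averageMap)
  have hproj := (Representation.isProj_averageMap ρ).trace
  have havg : LinearMap.trace ℂ _ ρ.averageMap =
      ⅟ (Fintype.card G : ℂ) • ∑ g : G, LinearMap.trace ℂ _ (ρ g) := by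
    simp [Representation.averageMap, GroupAlgebra.average, map_sum]
  rw [← hproj, havg, smul_eq_mul, invOf_eq_inv, ← one_div]
  congr 1
  exact Finset.sum_congr rfl fun g _ => rep_trace d m G g
end
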